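/- The thinning map is measurable: for every δ > 0, the map T_δ : 𝕄^d → 𝕄^d defined by T_δ(Y) = {(y,ρ) ∈ Y : min{d_Y(y)/2, 1/ρ} < δ} is measurable with respect to the σ-algebra 𝓜^d generated by the evaluation maps Y ↦ card(Y ∩ E), E Borel in ℝ^d × ℝ⁺. -/

import Mathlib

open MeasureTheory Set Metric Filter
open scoped ENNReal Pointwise symmDiff

noncomputable section

/-- Locations of points: `ℝ^d`. -/
abbrev Rd (d : ℕ) := EuclideanSpace ℝ (Fin d)

/-- A configuration of marked points: a set of (location, mark) pairs. -/
structure Config (d : ℕ) where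
  pts : Set (Rd d × ℝ)

/-- Admissibility: positive marks, a unique mark per location, and locally finitely
many points. -/
def Admissible {d : ℕ} (Y : Set (Rd d × ℝ)) : Prop :=
  (∀ p ∈ Y, 0 < p.2) ∧
  (∀ y ρ₁ ρ₂, (y, ρ₁) ∈ Y → (y, ρ₂) ∈ Y → ρ₁ = ρ₂) ∧
  (∀ B : Set (Rd d), Bornology.IsBounded B → (Y ∩ B ×ˢ univ).Finite)

/-- The σ-algebra on configurations generated by the counting evaluations
`Y ↦ card (Y ∩ E)`, `E` Borel. -/
instance configMeasurableSpace (d : ℕ) : MeasurableSpace (Config d) :=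
  MeasurableSpace.generateFrom
    {A : Set (Config d) | ∃ (E : Set (Rd d × ℝ)) (n : ℕ∞),
      MeasurableSet E ∧ A = {Y | (Y.pts ∩ E).encard = n}}

/-- Translation of a configuration by `τ` (marks unchanged). -/
def mppTranslate {d : ℕ} (τ : Rd d) (Y : Config d) : Config d :=
  ⟨(fun p => (p.1 + τ, p.2)) '' Y.pts⟩

/-- A marked point process `M` is stationary if its law is invariant under translations. -/
def Stationary {d : ℕ} {Ω : Type*} [MeasurableSpace Ω] (ℙ : Measure Ω)
    (M : Ω → Config d) : Prop :=
  ∀ τ : Rd d, Measure.map (fun ω => mppTranslate τ (M ω)) ℙ = Measure.map M ℙ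

/-- Finite intensity: the expected number of points in any bounded Borel region is finite. -/
def FiniteIntensity {d : ℕ} {Ω : Type*} [MeasurableSpace Ω] (ℙ : Measure Ω)
    (M : Ω → Config d) : Prop :=
  ∀ B : Set (Rd d), Bornology.IsBounded B → MeasurableSet B →
    ∫⁻ ω, (((M ω).pts ∩ B ×ˢ univ).encard : ℝ≥0∞) ∂ℙ < ⊤

/-- The `δ`-thinning of a configuration: keep exactly the points `(y, ρ)` with
`min {d_Y(y)/2, 1/ρ} < δ`, i.e. those having another point within distance `< 2δ`
or mark larger than `1/δ`. -/
def thinSet {d : ℕ} (δ : ℝ) (Y : Set (Rd d × ℝ)) : Set (Rd d × ℝ) :=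
  {p | p ∈ Y ∧ ((∃ q ∈ Y, q.1 ≠ p.1 ∧ dist p.1 q.1 < 2 * δ) ∨ 1 / p.2 < δ)}

/-- The thinning map on configurations. -/
def thinC {d : ℕ} (δ : ℝ) (Y : Config d) : Config d := ⟨thinSet δ Y.pts⟩

namespace ThinAux


lemma enat_measurableSet (s : Set ℕ∞) : MeasurableSet s := by
  exact MeasurableSpace.measurableSet_top

lemma measurable_count {d : ℕ} {E : Set (Rd d × ℝ)} (hE : MeasurableSet E) :
    Measurable fun Y : Config d => (Y.pts ∩ E).encard := by
  apply measurable_to_countable'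
  intro n
  exact MeasurableSpace.measurableSet_generateFrom ⟨E, n, hE, rfl⟩

lemma measurable_enat {α : Type*} [MeasurableSpace α] {g : α → ℕ∞}
    (h : ∀ m : ℕ, MeasurableSet {a | g a ≤ (m : ℕ∞)}) : Measurable g := by
  apply measurable_to_countable'
  intro n
  induction n using ENat.recTopCoe with
  | top =>
    have he : g ⁻¹' {⊤} = ⋂ m : ℕ, {a | g a ≤ (m : ℕ∞)}ᶜ := by
      ext a
      simp only [mem_preimage, mem_singleton_iff, mem_iInter, mem_compl_iff, mem_setOf_eq]
      constructor
      · intro hg m hm; rw [hg] at hm; exact (by simp at hm)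
      · intro hm
        by_contra hne
        obtain ⟨m, hgm⟩ := WithTop.ne_top_iff_exists.1 hne
        exact hm m (le_of_eq hgm.symm)
    rw [he]; exact MeasurableSet.iInter fun m => (h m).compl
  | coe m =>
    have he : g ⁻¹' {(m : ℕ∞)} = {a | g a ≤ (m : ℕ∞)} ∩ ⋂ j ∈ Finset.range m, {a | g a ≤ (j : ℕ∞)}ᶜ := by
      ext a
      simp only [mem_preimage, mem_singleton_iff, mem_inter_iff, mem_setOf_eq, mem_iInter,
        mem_compl_iff, Finset.mem_range]
      constructor
      · intro hg
        refine ⟨le_of_eq hg, fun j hj hle => ?_⟩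
        rw [hg] at hle
        exact absurd (by exact_mod_cast hle : m ≤ j) (Nat.not_le.2 hj)
      · rintro ⟨hle, hj⟩
        rcases lt_or_eq_of_le hle with hlt | heq
        · have hne := ne_top_of_lt hlt
          have hgg : ((g a).toNat : ℕ∞) = g a := ENat.coe_toNat hne
          have hjm : (g a).toNat < m := by
            rw [← hgg] at hlt; exact_mod_cast hlt
          exact absurd (le_of_eq hgg.symm) (hj _ hjm)
        · exact heq
    rw [he]
    exact (h m).inter (MeasurableSet.iInter fun j => MeasurableSet.iInter fun _ => (h j).compl)

lemma finset_le_encard_iff {ι : Type*} {s : Set ι} {m : ℕ} :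
    (m : ℕ∞) ≤ s.encard ↔ ∃ t : Finset ι, t.card = m ∧ ↑t ⊆ s := by
  constructor
  · intro h
    obtain ⟨t, hts, ht⟩ := Set.exists_subset_encard_eq h
    have htf : t.Finite := Set.finite_of_encard_eq_coe ht
    refine ⟨htf.toFinset, ?_, by simpa using hts⟩
    rw [Set.Finite.encard_eq_coe_toFinset_card htf] at ht
    exact_mod_cast ht
  · rintro ⟨t, rfl, hts⟩
    calc ((t.card : ℕ∞)) = (↑t : Set ι).encard := (Set.encard_coe_eq_coe_finsetCard t).symm
    _ ≤ s.encard := Set.encard_le_encard hts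

lemma measurable_encard_setOf {α ι : Type*} [MeasurableSpace α] [Countable ι] {p : ι → α → Prop}
    (h : ∀ i, MeasurableSet {a | p i a}) :
    Measurable fun a => ({i | p i a}).encard := by
  apply measurable_enat
  intro m
  have he : {a | ({i | p i a}).encard ≤ (m : ℕ∞)}
      = (⋃ (t : Finset ι) (_ : t.card = m + 1), ⋂ i ∈ t, {a | p i a})ᶜ := by
    ext a
    simp only [mem_setOf_eq, mem_compl_iff, mem_iUnion, mem_iInter, not_exists]
    constructor
    · intro hle t htc hsub
      have : ((m + 1 : ℕ) : ℕ∞) ≤ ({i | p i a}).encard :=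
        finset_le_encard_iff.2 ⟨t, htc, fun i hi => hsub i hi⟩
      have hlt : ((m : ℕ∞)) < ((m + 1 : ℕ) : ℕ∞) := by exact_mod_cast Nat.lt_succ_self m
      exact absurd (le_trans this hle) hlt.not_ge
    · intro hno
      by_contra hle
      push_neg at hle
      have : ((m + 1 : ℕ) : ℕ∞) ≤ ({i | p i a}).encard := by
        push_cast
        exact Order.add_one_le_of_lt hle
      obtain ⟨t, htc, hsub⟩ := finset_le_encard_iff.1 this
      exact hno t htc (fun i hi => hsub hi)
  rw [he]
  exact (MeasurableSet.iUnion fun t => MeasurableSet.iUnion fun _ =>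
    MeasurableSet.iInter fun i => MeasurableSet.iInter fun _ => h i).compl

lemma measurable_iSup_enat {α : Type*} [MeasurableSpace α] {f : ℕ → α → ℕ∞}
    (hf : ∀ k, Measurable (f k)) : Measurable fun a => ⨆ k, f k a := by
  apply measurable_enat
  intro m
  have he : {a | (⨆ k, f k a) ≤ (m : ℕ∞)} = ⋂ k, {a | f k a ≤ (m : ℕ∞)} := by
    ext a; simp [iSup_le_iff]
  rw [he]
  exact MeasurableSet.iInter fun k =>
    show MeasurableSet (f k ⁻¹' {x | x ≤ (m : ℕ∞)}) from hf k (enat_measurableSet _)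



def eps (d k : ℕ) : ℝ := ((d : ℝ) + 1) * ((2:ℝ) ^ k)⁻¹

lemma eps_pos (d k : ℕ) : 0 < eps d k := by
  unfold eps; positivity

lemma exists_eps_lt (d : ℕ) {c : ℝ} (hc : 0 < c) : ∃ k : ℕ, eps d k < c := by
  obtain ⟨n, hn⟩ := exists_pow_lt_of_lt_one (x := c / ((d:ℝ)+1)) (y := (1/2 : ℝ))
    (by positivity) (by norm_num)
  refine ⟨n, ?_⟩
  have h1 : ((1:ℝ)/2) ^ n = ((2:ℝ) ^ n)⁻¹ := by
    rw [div_pow, one_pow, one_div]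
  have hd : (0:ℝ) < (d:ℝ) + 1 := by positivity
  have := mul_lt_mul_of_pos_left hn hd
  rw [h1] at this
  calc eps d n = ((d:ℝ)+1) * ((2:ℝ)^n)⁻¹ := rfl
  _ < ((d:ℝ)+1) * (c / ((d:ℝ)+1)) := this
  _ = c := by field_simp

def dybox {d : ℕ} (k : ℕ) (z : Fin d → ℤ) : Set (Rd d) :=
  {x | ∀ j, (z j : ℝ) ≤ x j * 2 ^ k ∧ x j * 2 ^ k < z j + 1}

def corner {d : ℕ} (k : ℕ) (z : Fin d → ℤ) : Rd d := WithLp.toLp 2 (fun j => (z j : ℝ) * ((2:ℝ) ^ k)⁻¹)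

def floorz {d : ℕ} (k : ℕ) (x : Rd d) : Fin d → ℤ := fun j => ⌊x j * 2 ^ k⌋

lemma mem_floorz {d : ℕ} (k : ℕ) (x : Rd d) : x ∈ dybox k (floorz k x) :=
  fun j => ⟨Int.floor_le _, Int.lt_floor_add_one _⟩

lemma eq_floorz {d : ℕ} {k : ℕ} {z : Fin d → ℤ} {x : Rd d} (hx : x ∈ dybox k z) :
    z = floorz k x := by
  funext j
  exact ((Int.floor_eq_iff.2 ⟨(hx j).1, (hx j).2⟩).symm : z j = ⌊x j * 2 ^ k⌋)

lemma dist_corner {d : ℕ} {k : ℕ} {z : Fin d → ℤ} {x : Rd d} (hx : x ∈ dybox k z) :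
    dist x (corner k z) ≤ eps d k := by
  have h2 : (0:ℝ) < 2 ^ k := by positivity
  have h2i : (0:ℝ) < ((2:ℝ) ^ k)⁻¹ := by positivity
  have hcoord : ∀ j, dist (x j) (corner k z j) ≤ ((2:ℝ)^k)⁻¹ := by
    intro j
    obtain ⟨ha, hb⟩ := hx j
    rw [Real.dist_eq, abs_le]
    have hc : corner k z j = (z j : ℝ) * ((2:ℝ)^k)⁻¹ := rfl
    rw [hc]
    have hmul : (2:ℝ)^k * ((2:ℝ)^k)⁻¹ = 1 := mul_inv_cancel₀ h2.ne'
    have ha' : (z j : ℝ) * ((2:ℝ)^k)⁻¹ ≤ x j := by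
      have := mul_le_mul_of_nonneg_right ha (le_of_lt h2i)
      rwa [mul_assoc, hmul, mul_one] at this
    have hb' : x j < ((z j : ℝ) + 1) * ((2:ℝ)^k)⁻¹ := by
      have := mul_lt_mul_of_pos_right hb h2i
      rwa [mul_assoc, hmul, mul_one] at this
    have hexp : ((z j:ℝ)+1) * ((2:ℝ)^k)⁻¹ = (z j:ℝ)*((2:ℝ)^k)⁻¹ + ((2:ℝ)^k)⁻¹ := by ring
    constructor
    · linarith
    · linarith
  calc dist x (corner k z) = √(∑ j, dist (x j) (corner k z j) ^ 2) :=
        EuclideanSpace.dist_eq x (corner k z)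
  _ ≤ √(∑ _j : Fin d, (((2:ℝ)^k)⁻¹)^2) := by
        apply Real.sqrt_le_sqrt
        refine Finset.sum_le_sum fun j _ => ?_
        exact pow_le_pow_left₀ dist_nonneg (hcoord j) 2
  _ = √((d:ℝ) * (((2:ℝ)^k)⁻¹)^2) := by
        rw [Finset.sum_const, Finset.card_univ, Fintype.card_fin, nsmul_eq_mul]
  _ ≤ √((((d:ℝ)+1) * ((2:ℝ)^k)⁻¹)^2) := by
        apply Real.sqrt_le_sqrt
        nlinarith [sq_nonneg (((2:ℝ)^k)⁻¹), Nat.cast_nonneg (α := ℝ) d]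
  _ = eps d k := by
        rw [Real.sqrt_sq (by positivity)]; rfl

lemma measurable_dybox {d : ℕ} (k : ℕ) (z : Fin d → ℤ) : MeasurableSet (dybox k z) := by
  have he : dybox k z = ⋂ j, (fun x : Rd d => x j) ⁻¹'
      {t : ℝ | (z j : ℝ) ≤ t * 2 ^ k ∧ t * 2 ^ k < z j + 1} := by
    ext x; simp [dybox]
  rw [he]
  refine MeasurableSet.iInter fun j => ?_
  have hm : Measurable fun x : Rd d => x j := (EuclideanSpace.proj (𝕜 := ℝ) j).continuous.measurable
  have hs : MeasurableSet {t : ℝ | (z j : ℝ) ≤ t * 2 ^ k ∧ t * 2 ^ k < z j + 1} := by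
    have : {t : ℝ | (z j : ℝ) ≤ t * 2 ^ k ∧ t * 2 ^ k < z j + 1}
        = (fun t : ℝ => t * 2 ^ k) ⁻¹' (Ico (z j : ℝ) ((z j : ℝ) + 1)) := rfl
    rw [this]
    exact (measurable_id.mul_const _) measurableSet_Ico
  exact hm hs

lemma loc_ne {d : ℕ} {P : Set (Rd d × ℝ)} (hA : Admissible P) {p q : Rd d × ℝ}
    (hp : p ∈ P) (hq : q ∈ P) (hne : p ≠ q) : p.1 ≠ q.1 := by
  intro h
  apply hne
  have hp' : (p.1, p.2) ∈ P := by simpa using hp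
  have hq' : (p.1, q.2) ∈ P := by rw [h]; simpa using hq
  exact Prod.ext h (hA.2.1 p.1 p.2 q.2 hp' hq')

def M (d : ℕ) (δ : ℝ) : Set (Rd d × ℝ) := {p | 1 / p.2 < δ}

lemma measurable_M (d : ℕ) (δ : ℝ) : MeasurableSet (M d δ) := by
  have h : M d δ = (fun p : Rd d × ℝ => 1 / p.2) ⁻¹' (Iio δ) := rfl
  rw [h]
  exact (measurable_const.div measurable_snd) measurableSet_Iio

def Gset {d : ℕ} (δ : ℝ) (E : Set (Rd d × ℝ)) (k : ℕ) (z : Fin d → ℤ) : Set (Config d) :=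
  {Y | 1 ≤ (Y.pts ∩ (E ∩ dybox k z ×ˢ univ ∩ M d δ)).encard} ∪
  ({Y | 1 ≤ (Y.pts ∩ (E ∩ dybox k z ×ˢ univ)).encard} ∩
   ⋃ r : ℚ, {Y | (0 < (r:ℝ) ∧ (r:ℝ) + eps d k < 2 * δ) ∧
      2 ≤ (Y.pts ∩ (ball (corner k z) (r:ℝ) ×ˢ univ)).encard})

lemma meas_le_count {d : ℕ} {E : Set (Rd d × ℝ)} (hE : MeasurableSet E) (a : ℕ∞) :
    MeasurableSet {Y : Config d | a ≤ (Y.pts ∩ E).encard} :=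
  show MeasurableSet ((fun Y : Config d => (Y.pts ∩ E).encard) ⁻¹' {x | a ≤ x}) from
    measurable_count hE (enat_measurableSet _)

lemma measurable_Gset {d : ℕ} (δ : ℝ) {E : Set (Rd d × ℝ)} (hE : MeasurableSet E)
    (k : ℕ) (z : Fin d → ℤ) : MeasurableSet (Gset δ E k z) := by
  apply MeasurableSet.union
  · exact meas_le_count ((hE.inter ((measurable_dybox k z).prod MeasurableSet.univ)).inter
      (measurable_M d δ)) 1
  apply MeasurableSet.inter
  · exact meas_le_count (hE.inter ((measurable_dybox k z).prod MeasurableSet.univ)) 1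
  apply MeasurableSet.iUnion
  intro r
  by_cases hr : (0 < (r:ℝ) ∧ (r:ℝ) + eps d k < 2 * δ)
  · have h : {Y : Config d | (0 < (r:ℝ) ∧ (r:ℝ) + eps d k < 2 * δ) ∧
        2 ≤ (Y.pts ∩ (ball (corner k z) (r:ℝ) ×ˢ univ)).encard}
        = {Y : Config d | 2 ≤ (Y.pts ∩ (ball (corner k z) (r:ℝ) ×ˢ univ)).encard} := by
      ext Y; simp [hr]
    rw [h]
    exact meas_le_count (measurableSet_ball.prod MeasurableSet.univ) 2
  · have h : {Y : Config d | (0 < (r:ℝ) ∧ (r:ℝ) + eps d k < 2 * δ) ∧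
        2 ≤ (Y.pts ∩ (ball (corner k z) (r:ℝ) ×ˢ univ)).encard} = ∅ := by
      ext Y; simp only [mem_setOf_eq, mem_empty_iff_false, iff_false]
      exact fun h => hr h.1
    rw [h]
    exact MeasurableSet.empty

def cnt {d : ℕ} (δ : ℝ) (E : Set (Rd d × ℝ)) (k : ℕ) : Config d → ℕ∞ :=
  fun Y => ({z : Fin d → ℤ | Y ∈ Gset δ E k z}).encard

lemma measurable_cnt {d : ℕ} (δ : ℝ) {E : Set (Rd d × ℝ)} (hE : MeasurableSet E) (k : ℕ) :
    Measurable (cnt δ E k) :=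
  measurable_encard_setOf (fun z => measurable_Gset δ hE k z)

lemma cnt_le {d : ℕ} {δ : ℝ} (hδ : 0 < δ) (E : Set (Rd d × ℝ)) (Y : Config d)
    (hY : Admissible Y.pts) (k : ℕ) :
    cnt δ E k Y ≤ (thinSet δ Y.pts ∩ E).encard := by
  have hex : ∀ z : Fin d → ℤ, ∃ p : Rd d × ℝ, Y ∈ Gset δ E k z →
      (p ∈ thinSet δ Y.pts ∩ E ∧ p.1 ∈ dybox k z) := by
    intro z
    by_cases hz : Y ∈ Gset δ E k z
    swap
    · exact ⟨(0, 0), fun h => absurd h hz⟩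
    rcases hz with h1 | ⟨h2, h3⟩
    · obtain ⟨p, hpY, ⟨hpE, hpbox⟩, hpM⟩ := Set.one_le_encard_iff_nonempty.1 h1
      exact ⟨p, fun _ => ⟨⟨⟨hpY, Or.inr hpM⟩, hpE⟩, hpbox.1⟩⟩
    · obtain ⟨r, ⟨hr0, hrδ⟩, hr2⟩ := mem_iUnion.1 h3
      obtain ⟨p, hpY, hpE, hpbox⟩ := Set.one_le_encard_iff_nonempty.1 h2
      have h1lt : 1 < (Y.pts ∩ (ball (corner k z) (r:ℝ) ×ˢ univ)).encard :=
        lt_of_lt_of_le (by norm_num : (1:ℕ∞) < 2) hr2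
      obtain ⟨b, hb, hbp⟩ := Set.exists_ne_of_one_lt_encard h1lt p
      have hbY : b ∈ Y.pts := hb.1
      have hbball : b.1 ∈ ball (corner k z) (r:ℝ) := hb.2.1
      have hploc : p.1 ∈ dybox k z := hpbox.1
      have hb1 : b.1 ≠ p.1 := loc_ne hY hbY hpY hbp
      have hdist : dist p.1 b.1 < 2 * δ := by
        have hh1 : dist p.1 (corner k z) ≤ eps d k := dist_corner hploc
        have hh2 : dist b.1 (corner k z) < (r:ℝ) := mem_ball.1 hbball
        calc dist p.1 b.1 ≤ dist p.1 (corner k z) + dist (corner k z) b.1 := dist_triangle _ _ _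
        _ = dist p.1 (corner k z) + dist b.1 (corner k z) := by rw [dist_comm (corner k z) b.1]
        _ < eps d k + (r:ℝ) := add_lt_add_of_le_of_lt hh1 hh2
        _ < 2 * δ := by linarith
      exact ⟨p, fun _ => ⟨⟨⟨hpY, Or.inl ⟨b, hbY, hb1, hdist⟩⟩, hpE⟩, hploc⟩⟩
  choose φ hφ using hex
  have himg : φ '' {z : Fin d → ℤ | Y ∈ Gset δ E k z} ⊆ thinSet δ Y.pts ∩ E := by
    rintro _ ⟨z, hz, rfl⟩
    exact (hφ z hz).1
  have hinj : Set.InjOn φ {z : Fin d → ℤ | Y ∈ Gset δ E k z} := by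
    intro z1 h1 z2 h2 heq
    have e1 := (hφ z1 h1).2
    have e2 := (hφ z2 h2).2
    rw [heq] at e1
    exact (eq_floorz e1).trans (eq_floorz e2).symm
  calc cnt δ E k Y = (φ '' {z : Fin d → ℤ | Y ∈ Gset δ E k z}).encard := hinj.encard_image.symm
  _ ≤ _ := Set.encard_le_encard himg

lemma le_cnt {d : ℕ} {δ : ℝ} (hδ : 0 < δ) (E : Set (Rd d × ℝ)) (Y : Config d)
    (hY : Admissible Y.pts) (n : ℕ)
    (hn : (n:ℕ∞) ≤ (thinSet δ Y.pts ∩ E).encard) : ∃ k, (n:ℕ∞) ≤ cnt δ E k Y := by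
  rcases Nat.eq_zero_or_pos n with rfl | hpos
  · exact ⟨0, by simp⟩
  obtain ⟨t, hts, htn⟩ := Set.exists_subset_encard_eq hn
  have htf : t.Finite := Set.finite_of_encard_eq_coe htn
  have claim1 : ∀ p : Rd d × ℝ, ∃ c : ℝ, 0 < c ∧
      (p ∈ thinSet δ Y.pts ∩ E → ∀ k, eps d k < c → Y ∈ Gset δ E k (floorz k p.1)) := by
    intro p
    by_cases hp : p ∈ thinSet δ Y.pts ∩ E
    swap
    · exact ⟨1, one_pos, fun h => absurd h hp⟩
    obtain ⟨⟨hpY, hdisj⟩, hpE⟩ := hp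
    rcases hdisj with ⟨q, hqY, hq1, hqd⟩ | hmark
    · refine ⟨(2*δ - dist p.1 q.1)/2, by linarith, fun _ k hk => ?_⟩
      have hb : p.1 ∈ dybox k (floorz k p.1) := mem_floorz k p.1
      have hd0 : (0:ℝ) ≤ dist p.1 q.1 := dist_nonneg
      have hepos := eps_pos d k
      have hgap : dist p.1 q.1 + eps d k < 2*δ - eps d k := by linarith
      obtain ⟨r, hr1, hr2⟩ := exists_rat_btwn hgap
      have hr0 : 0 < (r:ℝ) := lt_of_le_of_lt (by linarith) hr1
      refine Or.inr ⟨?_, mem_iUnion.2 ⟨r, ⟨⟨hr0, by linarith⟩, ?_⟩⟩⟩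
      · exact Set.one_le_encard_iff_nonempty.2 ⟨p, hpY, hpE, ⟨hb, mem_univ _⟩⟩
      · have hpball : p.1 ∈ ball (corner k (floorz k p.1)) (r:ℝ) := by
          rw [mem_ball]
          calc dist p.1 (corner k (floorz k p.1)) ≤ eps d k := dist_corner hb
          _ < (r:ℝ) := by linarith
        have hqball : q.1 ∈ ball (corner k (floorz k p.1)) (r:ℝ) := by
          rw [mem_ball]
          calc dist q.1 (corner k (floorz k p.1))
              ≤ dist q.1 p.1 + dist p.1 (corner k (floorz k p.1)) := dist_triangle _ _ _
          _ ≤ dist p.1 q.1 + eps d k := by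
              rw [dist_comm q.1 p.1]; exact add_le_add le_rfl (dist_corner hb)
          _ < (r:ℝ) := hr1
        have hpq : p ≠ q := fun h => hq1 (by rw [h])
        have hlt : 1 < (Y.pts ∩ (ball (corner k (floorz k p.1)) (r:ℝ) ×ˢ univ)).encard :=
          Set.one_lt_encard_iff.2 ⟨p, q, ⟨hpY, hpball, mem_univ _⟩, ⟨hqY, hqball, mem_univ _⟩, hpq⟩
        rw [show (2:ℕ∞) = 1 + 1 from rfl]
        exact (ENat.add_one_le_iff (by simp)).2 hlt
    · exact ⟨1, one_pos, fun _ k _ => Or.inl (Set.one_le_encard_iff_nonempty.2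
        ⟨p, hpY, ⟨⟨hpE, ⟨mem_floorz k p.1, mem_univ _⟩⟩, hmark⟩⟩)⟩
  have claim2 : ∀ p p' : Rd d × ℝ, p.1 ≠ p'.1 → ∀ k, eps d k < dist p.1 p'.1 / 2 →
      floorz k p.1 ≠ floorz k p'.1 := by
    intro p p' hne k hk heq
    have h1 : dist p.1 (corner k (floorz k p.1)) ≤ eps d k := dist_corner (mem_floorz k p.1)
    have h2 : dist p'.1 (corner k (floorz k p'.1)) ≤ eps d k := dist_corner (mem_floorz k p'.1)
    rw [← heq] at h2
    have hle : dist p.1 p'.1 ≤ eps d k + eps d k := by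
      calc dist p.1 p'.1 ≤ dist p.1 (corner k (floorz k p.1))
          + dist (corner k (floorz k p.1)) p'.1 := dist_triangle _ _ _
      _ = dist p.1 (corner k (floorz k p.1)) + dist p'.1 (corner k (floorz k p.1)) := by
          rw [dist_comm (corner k (floorz k p.1)) p'.1]
      _ ≤ eps d k + eps d k := add_le_add h1 h2
    have hdpos : 0 < dist p.1 p'.1 := dist_pos.2 hne
    linarith
  classical
  choose c hc0 hc using claim1
  have htne : t.Nonempty := by
    rw [← Set.encard_pos, htn]
    exact_mod_cast hpos
  have hTne : htf.toFinset.Nonempty := by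
    rwa [Set.Finite.toFinset_nonempty]
  set T := htf.toFinset with hT
  set g : (Rd d × ℝ) × (Rd d × ℝ) → ℝ :=
    fun pq => if pq.1 = pq.2 then 1 else dist pq.1.1 pq.2.1 / 2 with hg
  set B := min (T.inf' hTne c) ((T ×ˢ T).inf' (hTne.product hTne) g) with hB
  have hBpos : 0 < B := by
    apply lt_min
    · rw [Finset.lt_inf'_iff]; exact fun p _ => hc0 p
    · rw [Finset.lt_inf'_iff]
      rintro ⟨p, q⟩ hpq
      rw [Finset.mem_product] at hpq
      by_cases h : p = q
      · simp [hg, h]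
      · have hp : p ∈ t := htf.mem_toFinset.1 hpq.1
        have hq : q ∈ t := htf.mem_toFinset.1 hpq.2
        have hpq1 : p.1 ≠ q.1 := loc_ne hY (hts hp).1.1 (hts hq).1.1 h
        simp only [hg, h, if_false]
        exact div_pos (dist_pos.2 hpq1) two_pos
  obtain ⟨k, hkB⟩ := exists_eps_lt d hBpos
  have himg : (fun p : Rd d × ℝ => floorz k p.1) '' t ⊆ {z : Fin d → ℤ | Y ∈ Gset δ E k z} := by
    rintro _ ⟨p, hp, rfl⟩
    have hpT : p ∈ T := htf.mem_toFinset.2 hp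
    have hcp : eps d k < c p :=
      lt_of_lt_of_le hkB (le_trans (min_le_left _ _) (Finset.inf'_le c hpT))
    exact hc p (hts hp) k hcp
  have hinj : Set.InjOn (fun p : Rd d × ℝ => floorz k p.1) t := by
    intro p hp q hq heq
    by_contra hne
    have hpq1 : p.1 ≠ q.1 := loc_ne hY (hts hp).1.1 (hts hq).1.1 hne
    have hmem : (p, q) ∈ T ×ˢ T :=
      Finset.mem_product.2 ⟨htf.mem_toFinset.2 hp, htf.mem_toFinset.2 hq⟩
    have hgle : B ≤ g (p, q) := le_trans (min_le_right _ _) (Finset.inf'_le g hmem)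
    have hgeq : g (p, q) = dist p.1 q.1 / 2 := by simp [hg, hne]
    have hlt : eps d k < dist p.1 q.1 / 2 := by
      rw [hgeq] at hgle; linarith
    exact claim2 p q hpq1 k hlt heq
  refine ⟨k, ?_⟩
  calc (n:ℕ∞) = t.encard := htn.symm
  _ = ((fun p : Rd d × ℝ => floorz k p.1) '' t).encard := hinj.encard_image.symm
  _ ≤ _ := Set.encard_le_encard himg

lemma F_eq {d : ℕ} {δ : ℝ} (hδ : 0 < δ) (E : Set (Rd d × ℝ)) (Y : Config d)
    (hY : Admissible Y.pts) :
    (⨆ k, cnt δ E k Y) = (thinSet δ Y.pts ∩ E).encard := by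
  apply le_antisymm (iSup_le fun k => cnt_le hδ E Y hY k)
  have key : ∀ n : ℕ, (n:ℕ∞) ≤ (thinSet δ Y.pts ∩ E).encard → (n:ℕ∞) ≤ ⨆ k, cnt δ E k Y := by
    intro n hn
    obtain ⟨k, hk⟩ := le_cnt hδ E Y hY n hn
    exact le_trans hk (le_iSup (fun k => cnt δ E k Y) k)
  rcases eq_or_ne (thinSet δ Y.pts ∩ E).encard ⊤ with htop | hne
  · rw [htop]
    set x := ⨆ k, cnt δ E k Y with hx
    rcases eq_or_ne x ⊤ with hxt | hxn
    · rw [hxt]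
    · exfalso
      have hxe : ((x.toNat : ℕ) : ℕ∞) = x := ENat.coe_toNat hxn
      have h1 := key (x.toNat + 1) (htop ▸ le_top)
      rw [← hxe] at h1
      exact absurd (by exact_mod_cast h1) (Nat.not_succ_le_self _)
  · have he : (thinSet δ Y.pts ∩ E).encard
        = (((thinSet δ Y.pts ∩ E).encard.toNat : ℕ) : ℕ∞) := (ENat.coe_toNat hne).symm
    rw [he]
    exact key _ (le_of_eq he.symm)


end ThinAux

/-- The thinning map `T_δ : 𝕄^d → 𝕄^d` is measurable with respect to the σ-algebra
generated by the counting evaluations (the domain being the admissible configurations,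
with the induced σ-algebra). -/
theorem thinning_measurable {d : ℕ} (δ : ℝ) (hδ : 0 < δ) :
    Measurable (fun Y : {Y : Config d // Admissible Y.pts} => thinC δ (Y : Config d)) := by
  apply measurable_generateFrom
  rintro A ⟨E, n, hE, rfl⟩
  have key : (fun Y : {Y : Config d // Admissible Y.pts} => thinC δ (Y : Config d)) ⁻¹'
      {Y | (Y.pts ∩ E).encard = n}
      = Subtype.val ⁻¹' ((fun Y : Config d => ⨆ k, ThinAux.cnt δ E k Y) ⁻¹' {n}) := by
    ext Y
    simp only [mem_preimage, mem_setOf_eq, mem_singleton_iff, thinC]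
    rw [ThinAux.F_eq hδ E Y.1 Y.2]
  rw [key]
  exact measurable_subtype_coe
    ((ThinAux.measurable_iSup_enat (fun k => ThinAux.measurable_cnt δ hE k))
      (ThinAux.enat_measurableSet {n}))

end
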